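/- Let n, p, k be integers with 0 ≤ k < p−1, p < n and n−p+k > p, and suppose that k and p are even. Let σ_p : ℝ^n → ℝ^n be the involution that negates the first p coordinates: σ_p(u) = (−u_1,…,−u_p, u_{p+1},…,u_n). Then σ_p maps R(n,p,k) onto itself, and its restriction to R(n,p,k) is isotopic to the identity: there is a continuous map H : R(n,p,k) × [0,1] → R(n,p,k) with H(u,0) = u and H(u,1) = σ_p(u) for all u, such that for every t ∈ [0,1] the map u ↦ H(u,t) is a homeomorphism of R(n,p,k). -/

import Mathlib

open Metric

/-- The intersection of two quadrics in ℝⁿ associated to the polytope `P_k`: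
`u₁² + ⋯ + u_p² = p` and `u₁² + ⋯ + u_k² + u_{p+1}² + ⋯ + u_n² = n - p + k`. -/
def quadR (n p k : ℕ) : Set (EuclideanSpace ℝ (Fin n)) :=
  {u | (∑ j : Fin n, if (j : ℕ) < p then u j ^ 2 else 0) = (p : ℝ) ∧
       (∑ j : Fin n, if (j : ℕ) < k ∨ p ≤ (j : ℕ) then u j ^ 2 else 0) = (n : ℝ) - p + k}

/-- The involution of ℝⁿ negating the first `p` coordinates. -/
def sigmaP (n p : ℕ) : EuclideanSpace ℝ (Fin n) → EuclideanSpace ℝ (Fin n) :=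
  fun u => WithLp.toLp 2 (fun j => if (j : ℕ) < p then -u j else u j)

namespace Stmt2Aux

variable {n p k : ℕ}

/-- The pairing involution: swaps `2i ↔ 2i+1` in the first `p` coordinates. -/
def tau (n p : ℕ) (hpn : p < n) (j : Fin n) : Fin n :=
  if h : (j : ℕ) < p then
    if Even (j : ℕ) then ⟨(j : ℕ) + 1, lt_of_le_of_lt h hpn⟩
    else ⟨(j : ℕ) - 1, lt_of_le_of_lt (Nat.sub_le _ _) j.2⟩
  else j

def eps (p : ℕ) (j : ℕ) : ℝ :=
  if j < p then (if Even j then (-1 : ℝ) else 1) else 0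

lemma tau_of_ge (hpn : p < n) {j : Fin n} (h : p ≤ (j : ℕ)) : tau n p hpn j = j := by
  simp [tau, not_lt.2 h]

lemma tau_coe_even (hpn : p < n) {j : Fin n} (h : (j : ℕ) < p) (he : Even (j : ℕ)) :
    ((tau n p hpn j : Fin n) : ℕ) = (j : ℕ) + 1 := by
  simp [tau, h, he]

lemma tau_coe_odd (hpn : p < n) {j : Fin n} (h : (j : ℕ) < p) (he : ¬ Even (j : ℕ)) :
    ((tau n p hpn j : Fin n) : ℕ) = (j : ℕ) - 1 := by
  simp [tau, h, he]

lemma tau_lt_iff (hpn : p < n) {m : ℕ} (hme : Even m) (j : Fin n) :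
    ((tau n p hpn j : Fin n) : ℕ) < m ↔ (j : ℕ) < m := by
  by_cases h : (j : ℕ) < p
  · by_cases he : Even (j : ℕ)
    · rw [tau_coe_even hpn h he]
      obtain ⟨a, rfl⟩ := hme
      obtain ⟨b, hb⟩ := he
      omega
    · rw [tau_coe_odd hpn h he]
      obtain ⟨a, rfl⟩ := hme
      obtain ⟨b, hb⟩ := Nat.not_even_iff_odd.1 he
      omega
  · rw [tau_of_ge hpn (not_lt.1 h)]

lemma tau_tau (hpn : p < n) (hpe : Even p) (j : Fin n) :
    tau n p hpn (tau n p hpn j) = j := by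
  by_cases h : (j : ℕ) < p
  · by_cases he : Even (j : ℕ)
    · have h1 : ((tau n p hpn j : Fin n) : ℕ) = (j : ℕ) + 1 := tau_coe_even hpn h he
      have h2 : ((tau n p hpn j : Fin n) : ℕ) < p := by
        obtain ⟨a, rfl⟩ := hpe; obtain ⟨b, hb⟩ := he; omega
      have h3 : ¬ Even ((tau n p hpn j : Fin n) : ℕ) := by
        rw [h1]; simpa [Nat.even_add_one] using he
      apply Fin.ext
      rw [tau_coe_odd hpn h2 h3, h1]; omega
    · obtain ⟨b, hb⟩ := Nat.not_even_iff_odd.1 he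
      have h1 : ((tau n p hpn j : Fin n) : ℕ) = (j : ℕ) - 1 := tau_coe_odd hpn h he
      have h2 : ((tau n p hpn j : Fin n) : ℕ) < p := by omega
      have h3 : Even ((tau n p hpn j : Fin n) : ℕ) := by
        rw [h1]; exact ⟨b, by omega⟩
      apply Fin.ext
      rw [tau_coe_even hpn h2 h3, h1]; omega
  · rw [tau_of_ge hpn (not_lt.1 h), tau_of_ge hpn (not_lt.1 h)]

lemma eps_sq {j : ℕ} (h : j < p) : eps p j ^ 2 = 1 := by
  by_cases he : Even j <;> simp [eps, h, he]

lemma eps_of_ge {j : ℕ} (h : p ≤ j) : eps p j = 0 := by simp [eps, not_lt.2 h]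

lemma eps_tau (hpn : p < n) (hpe : Even p) {j : Fin n} (h : (j : ℕ) < p) :
    eps p ((tau n p hpn j : Fin n) : ℕ) = - eps p (j : ℕ) := by
  by_cases he : Even (j : ℕ)
  · have h1 := tau_coe_even hpn h he
    have h2 : ((tau n p hpn j : Fin n) : ℕ) < p := by
      obtain ⟨a, rfl⟩ := hpe; obtain ⟨b, hb⟩ := he; omega
    have h3 : ¬ Even ((tau n p hpn j : Fin n) : ℕ) := by
      rw [h1]; simpa [Nat.even_add_one] using he
    simp [eps, h, h2, he, h3]
  · have h1 := tau_coe_odd hpn h he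
    obtain ⟨b, hb⟩ := Nat.not_even_iff_odd.1 he
    have h2 : ((tau n p hpn j : Fin n) : ℕ) < p := by omega
    have h3 : Even ((tau n p hpn j : Fin n) : ℕ) := by rw [h1]; exact ⟨b, by omega⟩
    simp [eps, h, h2, he, h3]

lemma tau_ne_self (hpn : p < n) {j : Fin n} (h : (j : ℕ) < p) : tau n p hpn j ≠ j := by
  intro hE
  have hc : ((tau n p hpn j : Fin n) : ℕ) = (j : ℕ) := by rw [hE]
  by_cases he : Even (j : ℕ)
  · rw [tau_coe_even hpn h he] at hc; omega
  · rw [tau_coe_odd hpn h he] at hc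
    obtain ⟨b, hb⟩ := Nat.not_even_iff_odd.1 he
    omega

/-- The one-parameter rotation family: rotate paired coordinates by the rotation with
matrix entries `a, b`. -/
def rot (n p : ℕ) (hpn : p < n) (a b : ℝ) (u : EuclideanSpace ℝ (Fin n)) :
    EuclideanSpace ℝ (Fin n) :=
  WithLp.toLp 2 (fun j => if (j : ℕ) < p then a * u j + eps p (j : ℕ) * b * u (tau n p hpn j) else u j)

lemma sum_rot (hpn : p < n) (hpe : Even p) {a b : ℝ} (hab : a ^ 2 + b ^ 2 = 1)
    (P : Fin n → Prop) [DecidablePred P]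
    (hPtau : ∀ j, P (tau n p hpn j) ↔ P j) (u : EuclideanSpace ℝ (Fin n)) :
    (∑ j : Fin n, if P j then rot n p hpn a b u j ^ 2 else 0) =
      ∑ j : Fin n, if P j then u j ^ 2 else 0 := by
  have key : ∀ j : Fin n, (if P j then rot n p hpn a b u j ^ 2 else 0)
      = a ^ 2 * (if P j then u j ^ 2 else 0)
        + b ^ 2 * (if P j then u (tau n p hpn j) ^ 2 else 0)
        + (if P j then 2 * a * b * eps p (j : ℕ) * u j * u (tau n p hpn j) else 0) := by
    intro j
    by_cases hPj : P j
    · simp only [if_pos hPj]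
      by_cases hj : (j : ℕ) < p
      · have h1 : eps p (j : ℕ) ^ 2 = 1 := eps_sq hj
        simp only [rot, PiLp.toLp_apply, if_pos hj]
        linear_combination (b ^ 2 * u (tau n p hpn j) ^ 2) * h1
      · simp only [rot, PiLp.toLp_apply, if_neg hj]
        rw [tau_of_ge hpn (not_lt.1 hj), eps_of_ge (not_lt.1 hj)]
        linear_combination (- u j ^ 2) * hab
    · simp [hPj]
  rw [Finset.sum_congr rfl (fun j _ => key j), Finset.sum_add_distrib, Finset.sum_add_distrib,
    ← Finset.mul_sum, ← Finset.mul_sum]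
  have h2 : (∑ j : Fin n, if P j then u (tau n p hpn j) ^ 2 else 0)
      = ∑ j : Fin n, if P j then u j ^ 2 else 0 := by
    let e : Equiv.Perm (Fin n) := ⟨tau n p hpn, tau n p hpn, tau_tau hpn hpe, tau_tau hpn hpe⟩
    exact (Fintype.sum_equiv e _ _ (fun j => by
      simp only [e, Equiv.coe_fn_mk]
      rw [if_congr (hPtau j) rfl rfl, tau_tau hpn hpe j])).symm
  have h3 : (∑ j : Fin n, if P j then 2 * a * b * eps p (j : ℕ) * u j * u (tau n p hpn j) else 0)
      = 0 := by
    apply Finset.sum_ninvolution (tau n p hpn)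
    · intro j
      by_cases hPj : P j
      · have hPj' : P (tau n p hpn j) := (hPtau j).2 hPj
        by_cases hj : (j : ℕ) < p
        · rw [if_pos hPj, if_pos hPj', eps_tau hpn hpe hj, tau_tau hpn hpe]; ring
        · rw [if_pos hPj, if_pos hPj', tau_of_ge hpn (not_lt.1 hj), eps_of_ge (not_lt.1 hj)]
          ring
      · rw [if_neg hPj, if_neg (fun hc => hPj ((hPtau j).1 hc))]; ring
    · intro j hf
      by_cases hj : (j : ℕ) < p
      · exact tau_ne_self hpn hj
      · exact absurd (by simp [eps_of_ge (not_lt.1 hj)]) hf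
    · intro j; exact Finset.mem_univ _
    · exact tau_tau hpn hpe
  rw [h2, h3, add_zero, ← add_mul, hab, one_mul]

lemma rot_mem (hpn : p < n) (hpe : Even p) (hke : Even k) {a b : ℝ}
    (hab : a ^ 2 + b ^ 2 = 1) {u : EuclideanSpace ℝ (Fin n)} (hu : u ∈ quadR n p k) :
    rot n p hpn a b u ∈ quadR n p k := by
  obtain ⟨h1, h2⟩ := hu
  constructor
  · rw [← h1]
    exact sum_rot hpn hpe hab (fun j => (j : ℕ) < p) (fun j => tau_lt_iff hpn hpe j) u
  · rw [← h2]
    refine sum_rot hpn hpe hab (fun j => (j : ℕ) < k ∨ p ≤ (j : ℕ)) (fun j => ?_) u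
    show ((tau n p hpn j : Fin n) : ℕ) < k ∨ p ≤ ((tau n p hpn j : Fin n) : ℕ) ↔
      (j : ℕ) < k ∨ p ≤ (j : ℕ)
    rw [tau_lt_iff hpn hke j, ← not_lt, tau_lt_iff hpn hpe j, not_lt]

lemma rot_rot (hpn : p < n) (hpe : Even p) {a b : ℝ} (hab : a ^ 2 + b ^ 2 = 1)
    (u : EuclideanSpace ℝ (Fin n)) :
    rot n p hpn a (-b) (rot n p hpn a b u) = u := by
  ext j
  by_cases hj : (j : ℕ) < p
  · have hj' : ((tau n p hpn j : Fin n) : ℕ) < p := (tau_lt_iff hpn hpe j).2 hj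
    have h1 : eps p (j : ℕ) ^ 2 = 1 := eps_sq hj
    simp only [rot, PiLp.toLp_apply, if_pos hj, if_pos hj', eps_tau hpn hpe hj]
    rw [tau_tau hpn hpe j]
    linear_combination (u j) * hab + (u j * b ^ 2) * h1
  · simp only [rot, PiLp.toLp_apply, if_neg hj]

lemma rot_one_zero (hpn : p < n) (u : EuclideanSpace ℝ (Fin n)) :
    rot n p hpn 1 0 u = u := by
  ext j; by_cases hj : (j : ℕ) < p <;> simp [rot, hj]

lemma rot_neg_one_zero (hpn : p < n) (u : EuclideanSpace ℝ (Fin n)) :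
    rot n p hpn (-1) 0 u = sigmaP n p u := by
  ext j; by_cases hj : (j : ℕ) < p <;> simp [rot, sigmaP, hj]

lemma rot_continuous (hpn : p < n) {X : Type*} [TopologicalSpace X]
    {f g : X → ℝ} {U : X → EuclideanSpace ℝ (Fin n)}
    (hf : Continuous f) (hg : Continuous g) (hU : Continuous U) :
    Continuous fun x => rot n p hpn (f x) (g x) (U x) := by
  have hcoord : ∀ j : Fin n, Continuous fun x => U x j := fun j =>
    (continuous_apply j).comp ((EuclideanSpace.equiv (Fin n) ℝ).continuous.comp hU)
  have : Continuous fun x => (fun j : Fin n =>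
      if (j : ℕ) < p then f x * U x j + eps p (j : ℕ) * g x * U x (tau n p hpn j)
      else U x j) := by
    apply continuous_pi
    intro j
    by_cases hj : (j : ℕ) < p
    · simp only [if_pos hj]
      exact (hf.mul (hcoord j)).add ((continuous_const.mul hg).mul (hcoord _))
    · simp only [if_neg hj]; exact hcoord j
  exact (EuclideanSpace.equiv (Fin n) ℝ).symm.continuous.comp this

end Stmt2Aux
open Stmt2Aux in
/-- If `k` and `p` are even, then `σ_p` maps `R(n,p,k)` onto itself and its restriction to
`R(n,p,k)` is isotopic to the identity. -/
theorem stmt2 (n p k : ℕ) (hkp : k + 1 < p) (hpn : p < n) (h : 2 * p < n + k)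
    (hke : Even k) (hpe : Even p) :
    sigmaP n p '' quadR n p k = quadR n p k ∧
    ∃ H : quadR n p k × unitInterval → quadR n p k,
      Continuous H ∧
      (∀ u : quadR n p k, H (u, 0) = u) ∧
      (∀ u : quadR n p k, (H (u, 1) : EuclideanSpace ℝ (Fin n)) = sigmaP n p u) ∧
      (∀ t : unitInterval, IsHomeomorph (fun u : quadR n p k => H (u, t))) := by
  have hab10 : (1 : ℝ) ^ 2 + 0 ^ 2 = 1 := by norm_num
  have habneg : (-1 : ℝ) ^ 2 + (0 : ℝ) ^ 2 = 1 := by norm_num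
  have hsig : ∀ u : EuclideanSpace ℝ (Fin n), u ∈ quadR n p k → sigmaP n p u ∈ quadR n p k := by
    intro u hu
    rw [← rot_neg_one_zero hpn u]
    exact rot_mem hpn hpe hke habneg hu
  have hsig2 : ∀ u : EuclideanSpace ℝ (Fin n), sigmaP n p (sigmaP n p u) = u := by
    intro u; ext j; by_cases hj : (j : ℕ) < p <;> simp [sigmaP, hj]
  constructor
  · apply Set.Subset.antisymm
    · rintro v ⟨u, hu, rfl⟩; exact hsig u hu
    · intro u hu
      exact ⟨sigmaP n p u, hsig u hu, hsig2 u⟩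
  · -- the isotopy
    have habt : ∀ t : ℝ, Real.cos (Real.pi * t) ^ 2 + Real.sin (Real.pi * t) ^ 2 = 1 := by
      intro t; rw [add_comm]; exact Real.sin_sq_add_cos_sq _
    have habt' : ∀ t : ℝ,
        Real.cos (Real.pi * t) ^ 2 + (- Real.sin (Real.pi * t)) ^ 2 = 1 := by
      intro t
      rw [show (- Real.sin (Real.pi * t)) ^ 2 = Real.sin (Real.pi * t) ^ 2 by ring]
      exact habt t
    refine ⟨fun x => ⟨rot n p hpn (Real.cos (Real.pi * x.2)) (Real.sin (Real.pi * x.2)) x.1,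
      rot_mem hpn hpe hke (habt _) x.1.2⟩, ?_, ?_, ?_, ?_⟩
    · apply Continuous.subtype_mk
      exact rot_continuous hpn
        (Real.continuous_cos.comp (continuous_const.mul
          (continuous_subtype_val.comp continuous_snd)))
        (Real.continuous_sin.comp (continuous_const.mul
          (continuous_subtype_val.comp continuous_snd)))
        (continuous_subtype_val.comp continuous_fst)
    · intro u
      apply Subtype.ext
      show rot n p hpn (Real.cos (Real.pi * ((0 : unitInterval) : ℝ)))
        (Real.sin (Real.pi * ((0 : unitInterval) : ℝ))) u.1 = u.1
      norm_num
      exact rot_one_zero hpn u.1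
    · intro u
      show rot n p hpn (Real.cos (Real.pi * ((1 : unitInterval) : ℝ)))
        (Real.sin (Real.pi * ((1 : unitInterval) : ℝ))) u.1 = sigmaP n p u.1
      norm_num [Real.cos_pi, Real.sin_pi]
      exact rot_neg_one_zero hpn u.1
    · intro t
      have hcont : Continuous fun u : quadR n p k =>
          (⟨rot n p hpn (Real.cos (Real.pi * (t : ℝ))) (Real.sin (Real.pi * (t : ℝ))) u.1,
            rot_mem hpn hpe hke (habt _) u.2⟩ : quadR n p k) := by
        apply Continuous.subtype_mk
        exact rot_continuous hpn continuous_const continuous_const continuous_subtype_val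
      refine isHomeomorph_iff_exists_inverse.2 ⟨hcont, fun u =>
        ⟨rot n p hpn (Real.cos (Real.pi * (t : ℝ))) (- Real.sin (Real.pi * (t : ℝ))) u.1,
          rot_mem hpn hpe hke (habt' _) u.2⟩, ?_, ?_, ?_⟩
      · intro u
        exact Subtype.ext (rot_rot hpn hpe (habt _) u.1)
      · intro u
        apply Subtype.ext
        show rot n p hpn _ _ (rot n p hpn _ _ u.1) = u.1
        have h2 := rot_rot hpn hpe
          (a := Real.cos (Real.pi * (t : ℝ))) (b := - Real.sin (Real.pi * (t : ℝ)))
          (habt' _) u.1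
        rwa [neg_neg] at h2
      · apply Continuous.subtype_mk
        exact rot_continuous hpn continuous_const continuous_const continuous_subtype_val
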